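/- Let p be an odd prime, M a finite elementary abelian p-group, and H a subgroup of Aut(M) generated by two subgroups D and E, each of order p, such that D fixes pointwise a subgroup of index p of M and E fixes pointwise a subgroup of index p of M. If H is not a p-group, then the fixed-point subgroup C_M(H) = {x ∈ M : α(x) = x for all α ∈ H} has index exactly p^2 in M. -/

import Mathlib

/-- The subgroup of points of `M` fixed by every automorphism in `H`. -/
def fixedSubgroup {M : Type*} [Group M] (H : Subgroup (MulAut M)) : Subgroup M where
  carrier := {x | ∀ α ∈ H, α x = x}
  one_mem' := fun α _ => map_one α
  mul_mem' := fun {a b} ha hb α hα => by rw [map_mul, ha α hα, hb α hα]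
  inv_mem' := fun {a} ha α hα => by rw [map_inv, ha α hα]

section Aux

variable {M : Type*} [CommGroup M] [Finite M] {p : ℕ}

/-- An automorphism of order dividing `p` fixing pointwise a subgroup of
index `p` is a transvection: `σ x * x⁻¹ ∈ N` for all `x`. -/
lemma transvection_like (hp : p.Prime) (hexp : ∀ x : M, x ^ p = 1)
    {N : Subgroup M} (hN : N.index = p) (σ : MulAut M)
    (hfix : ∀ x ∈ N, σ x = x) (hord : σ ^ p = 1) :
    ∀ x : M, σ x * x⁻¹ ∈ N := by
  haveI : Fact p.Prime := ⟨hp⟩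
  intro x
  by_cases hx : x ∈ N
  · rw [hfix x hx, mul_inv_cancel]; exact N.one_mem
  · have hx1 : x ≠ 1 := fun h => hx (h ▸ N.one_mem)
    have hordx : orderOf x = p := orderOf_eq_prime (hexp x) hx1
    set Z := Subgroup.zpowers x with hZ
    have hxZ : x ∈ Z := Subgroup.mem_zpowers x
    have hcardZ : Nat.card Z = p := by rw [hZ, Nat.card_zpowers, hordx]
    have hpne : p ≠ 0 := hp.ne_zero
    have hsup : N ⊔ Z = ⊤ := by
      have hle : N ≤ N ⊔ Z := le_sup_left
      have hdvd : (N ⊔ Z).index ∣ p := hN ▸ Subgroup.index_dvd_of_le hle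
      rcases (Nat.dvd_prime hp).mp hdvd with h1 | h1
      · exact Subgroup.index_eq_one.mp h1
      · exfalso
        have hmul := Subgroup.relIndex_mul_index hle
        rw [h1, hN] at hmul
        have hrel : N.relIndex (N ⊔ Z) = 1 :=
          Nat.eq_of_mul_eq_mul_right (Nat.pos_of_ne_zero hpne)
            (hmul.trans (one_mul p).symm)
        have hle2 : N ⊔ Z ≤ N := Subgroup.relIndex_eq_one.mp hrel
        exact hx (hle2 ((le_sup_right : Z ≤ N ⊔ Z) hxZ))
    have hinf : N ⊓ Z = ⊥ := by
      have hle : N ⊓ Z ≤ Z := inf_le_right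
      have hdvd : Nat.card (N ⊓ Z : Subgroup M) ∣ p := by
        rw [← hcardZ]; exact Subgroup.card_dvd_of_le hle
      rcases (Nat.dvd_prime hp).mp hdvd with h1 | h1
      · exact Subgroup.card_eq_one.mp h1
      · exfalso
        have heq : N ⊓ Z = Z := Subgroup.eq_of_le_of_card_ge hle (by rw [hcardZ, h1])
        have hxin : x ∈ N ⊓ Z := by rw [heq]; exact hxZ
        exact hx hxin.1
    obtain ⟨n, hn, z, hz, hnz⟩ := Subgroup.mem_sup.mp
      (hsup ▸ Subgroup.mem_top (σ x) : σ x ∈ N ⊔ Z)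
    obtain ⟨k, hk⟩ := hz
    have hk' : x ^ k = z := hk
    have hsx : σ x = n * x ^ k := by rw [← hnz, ← hk']
    have hiter : ∀ j : ℕ, ∃ m ∈ N, (σ ^ j) x = m * x ^ ((k : ℤ) ^ j) := by
      intro j
      induction j with
      | zero => exact ⟨1, N.one_mem, by simp⟩
      | succ j ih =>
        obtain ⟨m, hm, hmj⟩ := ih
        refine ⟨m * n ^ ((k : ℤ) ^ j), N.mul_mem hm (N.zpow_mem hn _), ?_⟩
        have h1 : (σ ^ (j + 1)) x = σ ((σ ^ j) x) := by rw [pow_succ']; rfl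
        rw [h1, hmj, map_mul, map_zpow, hfix m hm, hsx, mul_zpow, ← zpow_mul,
          mul_assoc, pow_succ', zpow_mul]
    obtain ⟨m, hm, hmp⟩ := hiter p
    rw [hord] at hmp
    have hx' : x = m * x ^ ((k : ℤ) ^ p) := by simpa using hmp
    have hxp : m⁻¹ * x = x ^ ((k : ℤ) ^ p) := inv_mul_eq_iff_eq_mul.mpr hx'
    have hfin : x ^ ((k : ℤ) ^ p - 1) = m⁻¹ := by
      rw [zpow_sub, zpow_one, ← hxp]; group
    have hmem : x ^ ((k : ℤ) ^ p - 1) ∈ N ⊓ Z :=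
      ⟨by rw [hfin]; exact N.inv_mem hm, Z.zpow_mem hxZ _⟩
    have hone : x ^ ((k : ℤ) ^ p - 1) = 1 := by
      rw [hinf] at hmem; exact Subgroup.mem_bot.mp hmem
    have hdvd1 : ((p : ℤ)) ∣ (k : ℤ) ^ p - 1 := by
      have := orderOf_dvd_iff_zpow_eq_one.mpr hone
      rwa [hordx] at this
    have hk1 : ((p : ℤ)) ∣ (k : ℤ) - 1 := by
      have h0 : (((k : ℤ) ^ p - 1 : ℤ) : ZMod p) = 0 :=
        (ZMod.intCast_zmod_eq_zero_iff_dvd _ _).mpr hdvd1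
      push_cast at h0
      rw [ZMod.pow_card] at h0
      have : (((k : ℤ) - 1 : ℤ) : ZMod p) = 0 := by push_cast; linear_combination h0
      exact (ZMod.intCast_zmod_eq_zero_iff_dvd _ _).mp this
    have hxk : x ^ (k : ℤ) = x := by
      have h1 : x ^ ((k : ℤ) - 1) = 1 :=
        orderOf_dvd_iff_zpow_eq_one.mp (by rwa [hordx])
      calc x ^ (k : ℤ) = x ^ ((k : ℤ) - 1) * x ^ (1 : ℤ) := by rw [← zpow_add]; ring_nf
        _ = x := by rw [h1, one_mul, zpow_one]
    rw [hsx]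
    have : x ^ k = x ^ (k : ℤ) := rfl
    rw [this, hxk, mul_assoc, mul_inv_cancel, mul_one]
    exact hn

end Aux

/-- The subgroup of `MulAut M` of transvections with hyperplane containing... -/
def transvGroup {M : Type*} [CommGroup M] (N : Subgroup M) : Subgroup (MulAut M) where
  carrier := {σ | (∀ x ∈ N, σ x = x) ∧ ∀ x : M, σ x * x⁻¹ ∈ N}
  one_mem' := ⟨fun _ _ => rfl, fun x => by simpa using N.one_mem⟩
  mul_mem' := fun {a b} ha hb =>
    ⟨fun x hx => by show a (b x) = x; rw [hb.1 x hx, ha.1 x hx],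
     fun x => by
      show a (b x) * x⁻¹ ∈ N
      have h : a (b x) * x⁻¹ = (a (b x) * (b x)⁻¹) * (b x * x⁻¹) := by group
      rw [h]; exact N.mul_mem (ha.2 _) (hb.2 x)⟩
  inv_mem' := fun {a} ha => by
    have key : ∀ x : M, a⁻¹ x * x⁻¹ ∈ N := by
      intro x
      have h1 : a (a⁻¹ x) * (a⁻¹ x)⁻¹ ∈ N := ha.2 _
      have h2 : a (a⁻¹ x) = x := by simp
      rw [h2] at h1
      have h3 : a⁻¹ x * x⁻¹ = (x * (a⁻¹ x)⁻¹)⁻¹ := by group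
      rw [h3]; exact N.inv_mem h1
    refine ⟨fun x hx => ?_, key⟩
    have hy : a⁻¹ x ∈ N := by
      have := N.mul_mem (key x) hx
      rwa [inv_mul_cancel_right] at this
    have := ha.1 _ hy
    rw [a.apply_inv_self] at this
    rw [← this]

lemma transvGroup_pow_eq_one {M : Type*} [CommGroup M] {p : ℕ}
    (hexp : ∀ x : M, x ^ p = 1) {N : Subgroup M} {σ : MulAut M}
    (hσ : σ ∈ transvGroup N) : σ ^ p = 1 := by
  have key : ∀ j : ℕ, ∀ x : M, (σ ^ j) x = (σ x * x⁻¹) ^ j * x := by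
    intro j
    induction j with
    | zero => intro x; simp
    | succ j ih =>
      intro x
      have h1 : (σ ^ (j + 1)) x = σ ((σ ^ j) x) := by rw [pow_succ']; rfl
      rw [h1, ih, map_mul, map_pow, hσ.1 _ (hσ.2 x), pow_succ, mul_assoc,
        inv_mul_cancel_right]
  ext x
  rw [key p x, hexp (σ x * x⁻¹), one_mul]
  rfl

lemma index_inf_of_ne {M : Type*} [CommGroup M] [Finite M] {p : ℕ} (hp : p.Prime)
    {A B : Subgroup M} (hA : A.index = p) (hB : B.index = p) (hne : A ≠ B) :
    (A ⊓ B).index = p ^ 2 := by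
  have hpne : p ≠ 0 := hp.ne_zero
  have hBA : ¬ B ≤ A := by
    intro hle
    have hmul := Subgroup.relIndex_mul_index hle
    rw [hA, hB] at hmul
    have h1 : B.relIndex A = 1 :=
      Nat.eq_of_mul_eq_mul_right (Nat.pos_of_ne_zero hpne) (hmul.trans (one_mul p).symm)
    exact hne (le_antisymm (Subgroup.relIndex_eq_one.mp h1) hle)
  have hsup : A ⊔ B = ⊤ := by
    have hle : A ≤ A ⊔ B := le_sup_left
    have hdvd : (A ⊔ B).index ∣ p := hA ▸ Subgroup.index_dvd_of_le hle
    rcases (Nat.dvd_prime hp).mp hdvd with h1 | h1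
    · exact Subgroup.index_eq_one.mp h1
    · exfalso
      have hmul := Subgroup.relIndex_mul_index hle
      rw [h1, hA] at hmul
      have h2 : A.relIndex (A ⊔ B) = 1 :=
        Nat.eq_of_mul_eq_mul_right (Nat.pos_of_ne_zero hpne) (hmul.trans (one_mul p).symm)
      exact hBA (le_trans le_sup_right (Subgroup.relIndex_eq_one.mp h2))
  have hrel : B.relIndex A = p := by
    have h1 : B.relIndex (A ⊔ B) = B.relIndex A := Subgroup.relIndex_sup_right A B
    rw [hsup, Subgroup.relIndex_top_right, hB] at h1
    exact h1.symm
  have hmul := Subgroup.relIndex_mul_index (inf_le_left : A ⊓ B ≤ A)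
  rw [Subgroup.inf_relIndex_left, hrel, hA] at hmul
  rw [← hmul, sq]

lemma fixedSubgroup_eq {M : Type*} [CommGroup M] [Finite M] {p : ℕ} (hp : p.Prime)
    {D : Subgroup (MulAut M)} {N : Subgroup M} (hDcard : Nat.card D = p)
    (hN : N.index = p) (hfix : ∀ α ∈ D, ∀ x ∈ N, (α : MulAut M) x = x) :
    fixedSubgroup D = N := by
  have hle : N ≤ fixedSubgroup D := fun x hx α hα => hfix α hα x hx
  have hne : fixedSubgroup D ≠ ⊤ := by
    intro htop
    have hD1 : D = ⊥ := by
      rw [eq_bot_iff]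
      intro α hα
      rw [Subgroup.mem_bot]
      ext x
      have hxmem : x ∈ fixedSubgroup D := htop ▸ Subgroup.mem_top x
      exact hxmem α hα
    rw [hD1, Subgroup.card_bot] at hDcard
    exact hp.one_lt.ne' hDcard.symm
  have hdvd : (fixedSubgroup D).index ∣ p := hN ▸ Subgroup.index_dvd_of_le hle
  rcases (Nat.dvd_prime hp).mp hdvd with h1 | h1
  · exact absurd (Subgroup.index_eq_one.mp h1) hne
  · have hmul := Subgroup.relIndex_mul_index hle
    rw [h1, hN] at hmul
    have h2 : N.relIndex (fixedSubgroup D) = 1 :=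
      Nat.eq_of_mul_eq_mul_right hp.pos (hmul.trans (one_mul p).symm)
    exact le_antisymm (Subgroup.relIndex_eq_one.mp h2) hle

theorem stmt_14 {M : Type*} [CommGroup M] [Finite M] (p : ℕ) (hp : p.Prime)
    (hodd : Odd p) (hexp : ∀ x : M, x ^ p = 1)
    (D E H : Subgroup (MulAut M))
    (hDcard : Nat.card D = p) (hEcard : Nat.card E = p)
    (hD : ∃ N : Subgroup M, N.index = p ∧ ∀ α ∈ D, ∀ x ∈ N, (α : MulAut M) x = x)
    (hE : ∃ N : Subgroup M, N.index = p ∧ ∀ α ∈ E, ∀ x ∈ N, (α : MulAut M) x = x)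
    (hH : H = D ⊔ E) (hnotp : ¬ IsPGroup p H) :
    (fixedSubgroup H).index = p ^ 2 := by
  obtain ⟨N₁, hN1, hfixD⟩ := hD
  obtain ⟨N₂, hN2, hfixE⟩ := hE
  -- every element of D and E has order dividing p
  have hDp : ∀ α ∈ D, α ^ p = 1 := by
    intro α hα
    have h1 : (⟨α, hα⟩ : D) ^ p = 1 := by
      rw [← hDcard]; exact pow_card_eq_one'
    have := congrArg (Subtype.val : D → MulAut M) h1
    simpa using this
  have hEp : ∀ α ∈ E, α ^ p = 1 := by
    intro α hα
    have h1 : (⟨α, hα⟩ : E) ^ p = 1 := by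
      rw [← hEcard]; exact pow_card_eq_one'
    have := congrArg (Subtype.val : E → MulAut M) h1
    simpa using this
  by_cases h12 : N₁ = N₂
  · -- then H is a p-group, contradiction
    exfalso
    apply hnotp
    subst h12
    have hDK : D ≤ transvGroup N₁ := fun α hα =>
      ⟨hfixD α hα, transvection_like hp hexp hN1 α (hfixD α hα) (hDp α hα)⟩
    have hEK : E ≤ transvGroup N₁ := fun α hα =>
      ⟨hfixE α hα, transvection_like hp hexp hN2 α (hfixE α hα) (hEp α hα)⟩
    have hHK : H ≤ transvGroup N₁ := hH ▸ sup_le hDK hEK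
    intro g
    have hσ : (g : MulAut M) ^ p = 1 := transvGroup_pow_eq_one hexp (hHK g.2)
    refine ⟨1, Subtype.ext ?_⟩
    rw [SubgroupClass.coe_pow, OneMemClass.coe_one, pow_one, hσ]
  · -- fixedSubgroup H = N₁ ⊓ N₂, of index p²
    have hFD : fixedSubgroup D = N₁ := fixedSubgroup_eq hp hDcard hN1 hfixD
    have hFE : fixedSubgroup E = N₂ := fixedSubgroup_eq hp hEcard hN2 hfixE
    have hfixH : fixedSubgroup H = N₁ ⊓ N₂ := by
      apply le_antisymm
      · intro x hx
        constructor
        · rw [← hFD]; exact fun α hα => hx α (hH ▸ (le_sup_left : D ≤ D ⊔ E) hα)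
        · rw [← hFE]; exact fun α hα => hx α (hH ▸ (le_sup_right : E ≤ D ⊔ E) hα)
      · intro x hx α hα
        let S : Subgroup (MulAut M) :=
          { carrier := {σ | σ x = x}
            one_mem' := rfl
            mul_mem' := fun {a b} ha hb => by
              show a (b x) = x
              rw [show b x = x from hb, show a x = x from ha]
            inv_mem' := fun {a} ha => by
              show a⁻¹ x = x
              conv_lhs => rw [← show a x = x from ha]
              simp }
        have hDS : D ≤ S := fun β hβ => hfixD β hβ x hx.1
        have hES : E ≤ S := fun β hβ => hfixE β hβ x hx.2
        exact (hH ▸ sup_le hDS hES) hα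
    rw [hfixH]
    exact index_inf_of_ne hp hN1 hN2 h12
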